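/- Let N be a positive even integer and consider the functions on ℂ ∖ {0, 1} given by y_1(z) = (z/(1−z))^{N+1} P_N(1−z)², y_2(z) = P_N(1−z) P_N(z), and y_3(z) = ((1−z)/z)^{N+1} P_N(z)². Then each y_i satisfies the third-order differential equation z²(1−z)² y''' − 3(2z−1)z(1−z) y'' + ((N²+2N−6)z(1−z) − (N²+2N)) y' + (N²+2N)(1/2 − z) y = 0 on ℂ ∖ {0,1}, and y_1, y_2, y_3 are linearly independent over ℂ. -/

import Mathlib

open Polynomial Finset

noncomputable section

/-- The rising Pochhammer symbol `(q)_k = q(q+1)⋯(q+k-1)` over `ℚ`. -/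
def poch (q : ℚ) (k : ℕ) : ℚ := (ascPochhammer ℚ k).eval q

/-- Coefficient of `z^k` in `P_N(z) = ₂F₁(-N/2, N/2+1; -N; z)`. -/
def Pcoef (N k : ℕ) : ℚ :=
  poch (-(N : ℚ) / 2) k * poch ((N : ℚ) / 2 + 1) k /
    (poch (-(N : ℚ)) k * (Nat.factorial k : ℚ))

/-- The polynomial `P_N(z)`. -/
def Ppoly (N : ℕ) : ℚ[X] := ∑ k ∈ Finset.range (N / 2 + 1), C (Pcoef N k) * X ^ k

/-- `P_N` as a complex polynomial. -/
def PpolyC (N : ℕ) : ℂ[X] := (Ppoly N).map (algebraMap ℚ ℂ)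

/-- `y₁(z) = (z/(1-z))^{N+1} P_N(1-z)²`. -/
def y1 (N : ℕ) (z : ℂ) : ℂ := (z / (1 - z)) ^ (N + 1) * ((PpolyC N).eval (1 - z)) ^ 2

/-- `y₂(z) = P_N(1-z) P_N(z)`. -/
def y2 (N : ℕ) (z : ℂ) : ℂ := (PpolyC N).eval (1 - z) * (PpolyC N).eval z

/-- `y₃(z) = ((1-z)/z)^{N+1} P_N(z)²`. -/
def y3 (N : ℕ) (z : ℂ) : ℂ := ((1 - z) / z) ^ (N + 1) * ((PpolyC N).eval z) ^ 2

/-- A function `y` satisfies the third-order differential equation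
`z²(1-z)² y''' - 3(2z-1)z(1-z) y'' + ((N²+2N-6)z(1-z) - (N²+2N)) y' + (N²+2N)(1/2-z) y = 0`
on `ℂ ∖ {0, 1}`. -/
def SatThirdOrderODE (N : ℕ) (y : ℂ → ℂ) : Prop :=
  ∀ z : ℂ, z ≠ 0 → z ≠ 1 →
    z ^ 2 * (1 - z) ^ 2 * deriv^[3] y z
      - 3 * (2 * z - 1) * z * (1 - z) * deriv^[2] y z
      + (((N : ℂ) ^ 2 + 2 * N - 6) * z * (1 - z) - ((N : ℂ) ^ 2 + 2 * N)) * deriv y z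
      + ((N : ℂ) ^ 2 + 2 * N) * (1 / 2 - z) * y z = 0

/-! ### Auxiliary lemmas -/

lemma poch_zero' (q : ℚ) : poch q 0 = 1 := by simp [poch, ascPochhammer]

lemma poch_succ' (q : ℚ) (k : ℕ) : poch q (k+1) = poch q k * (q + k) := by
  simp [poch, ascPochhammer_succ_right]

lemma poch_negN_ne_zero (N k : ℕ) (h : k ≤ N) : poch (-(N:ℚ)) k ≠ 0 := by
  induction k with
  | zero => simp [poch_zero']
  | succ k ih =>
    rw [poch_succ']
    refine mul_ne_zero (ih (by omega)) ?_
    have : (k:ℚ) < N := by exact_mod_cast (by omega : k < N)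
    intro hc; apply this.ne'; linarith

lemma coeff_Ppoly (N k : ℕ) :
    (Ppoly N).coeff k = if k ≤ N/2 then Pcoef N k else 0 := by
  rw [Ppoly, finset_sum_coeff]
  simp only [coeff_C_mul, coeff_X_pow, mul_ite, mul_one, mul_zero]
  rw [Finset.sum_ite_eq]
  simp [Finset.mem_range, Nat.lt_succ_iff]

lemma Pcoef_succ (N j : ℕ) (h : j < N) :
    Pcoef N (j+1) * ((-(N:ℚ)+j) * ((j:ℚ)+1))
      = Pcoef N j * ((-(N:ℚ)/2 + j) * ((N:ℚ)/2+1+j)) := by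
  unfold Pcoef
  rw [poch_succ', poch_succ', poch_succ', Nat.factorial_succ]
  have hD : poch (-(N:ℚ)) j ≠ 0 := poch_negN_ne_zero _ _ (le_of_lt h)
  have hF : (j.factorial : ℚ) ≠ 0 := by exact_mod_cast j.factorial_ne_zero
  have hNj : (-(N:ℚ) + j) ≠ 0 := by
    have : (j:ℚ) < N := by exact_mod_cast h
    intro hc; apply this.ne'; linarith
  have hj1 : ((j:ℚ)+1) ≠ 0 := by positivity
  push_cast
  field_simp

lemma keyrec (N : ℕ) (hN2 : 2 ≤ N) (heven : Even N) (j : ℕ) :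
    ((j:ℚ)+1) * ((j:ℚ) - N) * (Ppoly N).coeff (j+1)
      = ((j:ℚ)^2 + j - ((N:ℚ)^2+2*N)/4) * (Ppoly N).coeff j := by
  obtain ⟨m, rfl⟩ := heven
  have hm1 : 1 ≤ m := by omega
  rcases lt_trichotomy j m with h | h | h
  · rw [coeff_Ppoly, coeff_Ppoly, if_pos (by omega), if_pos (by omega)]
    have hs := Pcoef_succ (m+m) j (by omega)
    push_cast at hs ⊢
    linear_combination hs
  · subst h
    rw [coeff_Ppoly, coeff_Ppoly, if_neg (by omega), if_pos (by omega)]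
    push_cast
    ring_nf
  · rw [coeff_Ppoly, coeff_Ppoly, if_neg (by omega), if_neg (by omega)]
    ring

lemma baseQ (N : ℕ) (hN2 : 2 ≤ N) (heven : Even N) :
    X * derivative (derivative (Ppoly N)) - X * (X * derivative (derivative (Ppoly N)))
      = C (N:ℚ) * derivative (Ppoly N) + C 2 * (X * derivative (Ppoly N))
        - C (((N:ℚ)^2+2*N)/4) * Ppoly N := by
  ext k
  simp only [coeff_sub, coeff_add, coeff_C_mul]
  match k with
  | 0 =>
      simp only [mul_coeff_zero, coeff_X_zero, zero_mul, coeff_derivative]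
      have h := keyrec N hN2 heven 0
      push_cast at h ⊢
      linear_combination h
  | 1 =>
      simp only [coeff_X_mul, mul_coeff_zero, coeff_X_zero, zero_mul, coeff_derivative]
      have h := keyrec N hN2 heven 1
      push_cast at h ⊢
      linear_combination h
  | (k+2) =>
      simp only [coeff_X_mul, coeff_derivative]
      have h := keyrec N hN2 heven (k+2)
      simp only [show k+2+1 = k+3 from by omega, show k+1+1+1 = k+3 from by omega,
        show k+1+1 = k+2 from by omega] at h ⊢
      push_cast at h ⊢
      linear_combination h

lemma baseC (N : ℕ) (hN2 : 2 ≤ N) (heven : Even N) :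
    X * derivative (derivative (PpolyC N)) - X * (X * derivative (derivative (PpolyC N)))
      = C (N:ℂ) * derivative (PpolyC N) + C 2 * (X * derivative (PpolyC N))
        - C (((N:ℂ)^2+2*N)/4) * PpolyC N := by
  have h := congrArg (map (algebraMap ℚ ℂ)) (baseQ N hN2 heven)
  simp only [Polynomial.map_mul, Polynomial.map_sub, Polynomial.map_add, Polynomial.map_C,
    Polynomial.map_X, ← derivative_map] at h
  rw [← PpolyC] at h
  convert h using 3 <;>
  · simp

lemma hb2C (N : ℕ) (hN2 : 2 ≤ N) (heven : Even N) (t : ℂ) :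
    t * (1-t) * eval t (derivative (derivative (PpolyC N)))
      = ((N:ℂ) + 2*t) * eval t (derivative (PpolyC N))
        - (((N:ℂ)^2+2*N)/4) * eval t (PpolyC N) := by
  have h := congrArg (eval t) (baseC N hN2 heven)
  simp only [eval_mul, eval_sub, eval_add, eval_C, eval_X] at h
  linear_combination h

lemma hb3C (N : ℕ) (hN2 : 2 ≤ N) (heven : Even N) (t : ℂ) :
    t * (1-t) * eval t (derivative (derivative (derivative (PpolyC N))))
      = ((N:ℂ) + 4*t - 1) * eval t (derivative (derivative (PpolyC N)))
        + (2 - ((N:ℂ)^2+2*N)/4) * eval t (derivative (PpolyC N)) := by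
  have hd := congrArg derivative (baseC N hN2 heven)
  have h := congrArg (eval t) hd
  simp only [derivative_mul, derivative_add, derivative_sub, derivative_C, derivative_X,
    eval_mul, eval_sub, eval_add, eval_C, eval_X, eval_one, eval_zero, zero_mul, one_mul,
    mul_zero, add_zero, zero_add] at h
  linear_combination h

lemma derivQuot (p : ℂ[X]) (m : ℕ) {z : ℂ} (hz : z ≠ 0) :
    deriv (fun w => eval w p / w ^ m) z
      = eval z (X * derivative p - C ((m:ℕ):ℂ) * p) / z ^ (m+1) := by
  have h1 : HasDerivAt (fun w => eval w p) (eval z (derivative p)) z := p.hasDerivAt z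
  have h2 : HasDerivAt (fun w : ℂ => w ^ m) ((m:ℂ) * z ^ (m-1)) z := hasDerivAt_pow m z
  have h3 : HasDerivAt (fun w => eval w p / w ^ m) _ z := h1.div h2 (pow_ne_zero m hz)
  rw [h3.deriv]
  simp only [eval_sub, eval_mul, eval_X, eval_C]
  rcases m with _ | k
  · field_simp
    simp
  · simp only [Nat.add_sub_cancel]
    have hzk : z ^ k ≠ 0 := pow_ne_zero _ hz
    field_simp
    ring

set_option maxHeartbeats 1000000 in
lemma sat3 (N : ℕ) (hN2 : 2 ≤ N) (heven : Even N) : SatThirdOrderODE N (y3 N) := by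
  set Q : ℂ[X] := (1 - X)^(N+1) * (PpolyC N)^2 with hQ
  set Q1 : ℂ[X] := X * derivative Q - C ((N+1 : ℕ):ℂ) * Q with hQ1
  set Q2 : ℂ[X] := X * derivative Q1 - C ((N+1+1 : ℕ):ℂ) * Q1 with hQ2
  set Q3 : ℂ[X] := X * derivative Q2 - C ((N+1+1+1 : ℕ):ℂ) * Q2 with hQ3
  have hy3 : y3 N = fun w => eval w Q / w ^ (N+1) := by
    funext w
    simp only [y3, hQ, eval_mul, eval_pow, eval_sub, eval_one, eval_X]
    rw [div_pow]; ring
  have h1 : ∀ w : ℂ, w ≠ 0 → deriv (y3 N) w = eval w Q1 / w ^ (N+1+1) := by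
    intro w hw
    rw [hy3, derivQuot Q (N+1) hw]
  have h2 : ∀ w : ℂ, w ≠ 0 → deriv (deriv (y3 N)) w = eval w Q2 / w ^ (N+1+1+1) := by
    intro w hw
    have hev : deriv (y3 N) =ᶠ[nhds w] fun u => eval u Q1 / u ^ (N+1+1) :=
      (eventually_ne_nhds hw).mono fun u hu => h1 u hu
    rw [hev.deriv_eq, derivQuot Q1 (N+1+1) hw]
  have h3 : ∀ w : ℂ, w ≠ 0 → deriv (deriv (deriv (y3 N))) w = eval w Q3 / w ^ (N+1+1+1+1) := by
    intro w hw
    have hev : deriv (deriv (y3 N)) =ᶠ[nhds w] fun u => eval u Q2 / u ^ (N+1+1+1) :=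
      (eventually_ne_nhds hw).mono fun u hu => h2 u hu
    rw [hev.deriv_eq, derivQuot Q2 (N+1+1+1) hw]
  intro z hz0 hz1
  have hz1' : (1:ℂ) - z ≠ 0 := sub_ne_zero.mpr (Ne.symm hz1)
  have hW : z^(N+1) ≠ 0 := pow_ne_zero _ hz0
  have hc1 : ((N-1:ℕ):ℂ) = (N:ℂ) - 1 := by
    rw [Nat.cast_sub (by omega : 1 ≤ N)]; norm_num
  have e1 : (1-z)^(N-1) = (1-z)^(N-1-1) * (1-z) := by rw [← pow_succ]; congr 1; omega
  have e2 : (1-z)^N = (1-z)^(N-1-1) * (1-z)^2 := by rw [← pow_add]; congr 1; omega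
  have e3 : (1-z)^(N+1) = (1-z)^(N-1-1) * (1-z)^3 := by rw [← pow_add]; congr 1; omega
  have K : z ^ 2 * (1 - z) ^ 2 * eval z Q3
      - 3 * (2 * z - 1) * z * (1 - z) * (z * eval z Q2)
      + (((N : ℂ) ^ 2 + 2 * N - 6) * z * (1 - z) - ((N : ℂ) ^ 2 + 2 * N)) * (z ^ 2 * eval z Q1)
      + ((N : ℂ) ^ 2 + 2 * N) * (1 / 2 - z) * (z ^ 3 * eval z Q) = 0 := by
    simp only [hQ3, hQ2, hQ1, hQ, derivative_mul, derivative_add, derivative_sub, derivative_pow,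
      derivative_one, derivative_X, derivative_C, derivative_neg, eval_mul, eval_sub, eval_add,
      eval_pow, eval_X, eval_C, eval_one, eval_neg, Nat.add_sub_cancel,
      show (2-1 : ℕ) = 1 from rfl, Nat.cast_ofNat, zero_mul, mul_zero, zero_sub, sub_zero,
      zero_add, add_zero, mul_one, one_mul, pow_one, neg_mul, mul_neg, neg_neg]
    simp only [hc1, e1, e2, e3]
    push_cast
    linear_combination
      ((1-z)^(N-1-1) * (2*z^4*(1-z)^4 * eval z (PpolyC N))) * hb3C N hN2 heven z
      + ((1-z)^(N-1-1) *
          (-2*z^3*eval z (PpolyC N) - 4*z^3*(N:ℂ)*eval z (PpolyC N)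
            + 6*z^4*eval z (derivative (PpolyC N)) + 2*z^4*eval z (PpolyC N)
            + 12*z^4*(N:ℂ)*eval z (PpolyC N) - 24*z^5*eval z (derivative (PpolyC N))
            + 6*z^5*eval z (PpolyC N) - 12*z^5*(N:ℂ)*eval z (PpolyC N)
            + 36*z^6*eval z (derivative (PpolyC N)) - 10*z^6*eval z (PpolyC N)
            + 4*z^6*(N:ℂ)*eval z (PpolyC N) - 24*z^7*eval z (derivative (PpolyC N))
            + 4*z^7*eval z (PpolyC N) + 6*z^8*eval z (derivative (PpolyC N)))) * hb2C N hN2 heven z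
  have h0z : y3 N z = eval z Q / z ^ (N+1) := by rw [hy3]
  simp only [Function.iterate_succ_apply', Function.iterate_zero_apply]
  rw [h3 z hz0, h2 z hz0, h1 z hz0, h0z]
  rw [show (z:ℂ)^(N+1+1+1+1) = z^(N+1) * z^3 by ring,
      show (z:ℂ)^(N+1+1+1) = z^(N+1) * z^2 by ring,
      show (z:ℂ)^(N+1+1) = z^(N+1) * z by ring]
  have hD : z^(N+1) * z^3 ≠ 0 := mul_ne_zero hW (pow_ne_zero _ hz0)
  rw [show eval z Q2 / (z^(N+1) * z^2) = (z * eval z Q2)/(z^(N+1) * z^3) from by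
        rw [div_eq_div_iff (mul_ne_zero hW (pow_ne_zero _ hz0)) hD]; ring,
      show eval z Q1 / (z^(N+1) * z) = (z^2 * eval z Q1)/(z^(N+1) * z^3) from by
        rw [div_eq_div_iff (mul_ne_zero hW hz0) hD]; ring,
      show eval z Q / z^(N+1) = (z^3 * eval z Q)/(z^(N+1) * z^3) from by
        rw [div_eq_div_iff hW hD]; ring]
  rw [← mul_div_assoc, ← mul_div_assoc, ← mul_div_assoc, ← mul_div_assoc]
  rw [← sub_div, ← add_div, ← add_div]
  rw [_root_.div_eq_zero_iff]
  left
  linear_combination K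

set_option maxHeartbeats 1000000 in
lemma sat2 (N : ℕ) (hN2 : 2 ≤ N) (heven : Even N) : SatThirdOrderODE N (y2 N) := by
  set R : ℂ[X] := (PpolyC N).comp (1 - X) * PpolyC N with hR
  have hy2 : y2 N = fun w => eval w R := by
    funext w
    simp [y2, hR, eval_comp]
  have hd1 : deriv (y2 N) = fun w => eval w (derivative R) := by
    funext w; rw [hy2]; simp
  have hd2 : deriv (deriv (y2 N)) = fun w => eval w (derivative (derivative R)) := by
    rw [hd1]; funext w; simp
  have hd3 : deriv (deriv (deriv (y2 N)))
      = fun w => eval w (derivative (derivative (derivative R))) := by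
    rw [hd2]; funext w; simp
  intro z hz0 hz1
  simp only [Function.iterate_succ_apply', Function.iterate_zero_apply]
  rw [hd3, hd2, hd1, hy2]
  simp only [hR, derivative_mul, derivative_comp, derivative_sub, derivative_add, derivative_neg,
    derivative_one, derivative_X, derivative_C, eval_mul, eval_add, eval_sub, eval_comp,
    eval_one, eval_X, eval_C, eval_neg, neg_mul, mul_neg, neg_neg, zero_sub, one_mul,
    mul_one, zero_mul, mul_zero, add_zero, zero_add, sub_zero]
  have ha2 := hb2C N hN2 heven (1-z)
  have ha3 := hb3C N hN2 heven (1-z)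
  have hbb2 := hb2C N hN2 heven z
  have hbb3 := hb3C N hN2 heven z
  linear_combination
    (-(z * eval z (PpolyC N)) + z^2 * eval z (PpolyC N)) * ha3
    + (z * eval (1-z) (PpolyC N) - z^2 * eval (1-z) (PpolyC N)) * hbb3
    + (-((N:ℂ) * eval z (PpolyC N)) + 3*z*eval z (derivative (PpolyC N))
        - 2*z*eval z (PpolyC N) - 3*z^2*eval z (derivative (PpolyC N))) * ha2
    + (2 * eval (1-z) (PpolyC N) + (N:ℂ) * eval (1-z) (PpolyC N)
        - 3*z*eval (1-z) (derivative (PpolyC N)) - 2*z*eval (1-z) (PpolyC N)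
        + 3*z^2*eval (1-z) (derivative (PpolyC N))) * hbb2

lemma sat_symm (N : ℕ) (Y : ℂ → ℂ) (h : SatThirdOrderODE N Y) :
    SatThirdOrderODE N (fun z => Y (1 - z)) := by
  have d1 : deriv (fun x : ℂ => Y (1-x)) = fun x => -deriv Y (1-x) := by
    funext x; exact deriv_comp_const_sub Y 1 x
  have d2 : deriv (deriv (fun x : ℂ => Y (1-x))) = fun x => deriv (deriv Y) (1-x) := by
    rw [d1]; funext x
    rw [deriv.fun_neg, deriv_comp_const_sub, neg_neg]
  have d3 : deriv (deriv (deriv (fun x : ℂ => Y (1-x))))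
      = fun x => -deriv (deriv (deriv Y)) (1-x) := by
    rw [d2]; funext x; exact deriv_comp_const_sub _ 1 x
  intro z hz0 hz1
  have h1z0 : (1:ℂ) - z ≠ 0 := sub_ne_zero.mpr (Ne.symm hz1)
  have h1z1 : (1:ℂ) - z ≠ 1 := fun hc => hz0 (by linear_combination -hc)
  have H := h (1-z) h1z0 h1z1
  simp only [Function.iterate_succ_apply', Function.iterate_zero_apply] at H ⊢
  rw [d3, d2, d1]
  beta_reduce
  linear_combination -H

lemma y1_eq_y3_symm (N : ℕ) : y1 N = fun z => y3 N (1 - z) := by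
  funext z
  simp only [y1, y3]
  rw [show (1:ℂ) - (1 - z) = z by ring]

lemma hP0 (N : ℕ) : eval 0 (PpolyC N) = 1 := by
  rw [← coeff_zero_eq_eval_zero, PpolyC, coeff_map, coeff_Ppoly]
  simp [Pcoef, poch_zero']

theorem stmt12 (N : ℕ) (hN : 0 < N) (heven : Even N) :
    SatThirdOrderODE N (y1 N) ∧ SatThirdOrderODE N (y2 N) ∧ SatThirdOrderODE N (y3 N) ∧
    LinearIndependent ℂ
      ![fun z : {z : ℂ // z ≠ 0 ∧ z ≠ 1} => y1 N z,
        fun z : {z : ℂ // z ≠ 0 ∧ z ≠ 1} => y2 N z,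
        fun z : {z : ℂ // z ≠ 0 ∧ z ≠ 1} => y3 N z] := by
  have hN2 : 2 ≤ N := by obtain ⟨m, rfl⟩ := heven; omega
  refine ⟨?_, sat2 N hN2 heven, sat3 N hN2 heven, ?_⟩
  · rw [y1_eq_y3_symm]
    exact sat_symm N (y3 N) (sat3 N hN2 heven)
  · rw [Fintype.linearIndependent_iff]
    intro c hc
    have hc' : ∀ z : ℂ, ∀ hz0 : z ≠ 0, ∀ hz1 : z ≠ 1,
        c 0 * y1 N z + c 1 * y2 N z + c 2 * y3 N z = 0 := by
      intro z hz0 hz1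
      have h := congrFun hc ⟨z, hz0, hz1⟩
      simpa [Fin.sum_univ_three] using h
    set A : ℂ[X] := (PpolyC N).comp (1 - X) with hA
    set T : ℂ[X] := C (c 0) * (X^(N+1))^2 * A^2
        + C (c 1) * (X^(N+1) * (1-X)^(N+1)) * (A * PpolyC N)
        + C (c 2) * ((1-X)^(N+1))^2 * (PpolyC N)^2 with hT
    have hTeval : ∀ z : ℂ, z ≠ 0 → z ≠ 1 → eval z T = 0 := by
      intro z hz0 hz1
      have h1z : (1:ℂ) - z ≠ 0 := sub_ne_zero.mpr (Ne.symm hz1)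
      have he : eval z T
          = z^(N+1) * (1-z)^(N+1) * (c 0 * y1 N z + c 1 * y2 N z + c 2 * y3 N z) := by
        simp only [hT, hA, eval_add, eval_mul, eval_pow, eval_sub, eval_one, eval_X, eval_C,
          eval_comp, y1, y2, y3, div_pow]
        field_simp
      rw [he, hc' z hz0 hz1, mul_zero]
    have hTzero : T = 0 := by
      refine Polynomial.eq_zero_of_infinite_isRoot T ?_
      have hfin : ({0, 1} : Set ℂ).Finite := (Set.finite_singleton 1).insert 0
      have hinf := hfin.infinite_compl
      refine hinf.mono ?_
      intro z hz
      simp only [Set.mem_compl_iff, Set.mem_insert_iff, Set.mem_singleton_iff, not_or] at hz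
      exact hTeval z hz.1 hz.2
    have hA1 : eval 1 A = 1 := by
      simp [hA, eval_comp, hP0]
    have hc2 : c 2 = 0 := by
      have h := congrArg (eval 0) hTzero
      simp [hT, hP0, hA, eval_comp] at h
      exact h
    have hc0 : c 0 = 0 := by
      have h := congrArg (eval 1) hTzero
      simp [hT, hA, eval_comp, hP0] at h
      exact h
    have hc1 : c 1 = 0 := by
      rw [hT, hc0, hc2] at hTzero
      simp only [map_zero, zero_mul, add_zero, zero_add] at hTzero
      have hXne : (X : ℂ[X])^(N+1) ≠ 0 := pow_ne_zero _ X_ne_zero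
      have h1Xne : ((1 : ℂ[X]) - X)^(N+1) ≠ 0 := by
        refine pow_ne_zero _ fun h => ?_
        have := congrArg (eval 0) h
        simp at this
      have hAne : A ≠ 0 := fun h => by simp [h] at hA1
      have hPne : PpolyC N ≠ 0 := fun h => by
        have := hP0 N
        rw [h] at this
        simp at this
      by_contra hne
      have hCne : C (c 1) ≠ 0 := by simpa using hne
      exact (mul_ne_zero (mul_ne_zero hCne (mul_ne_zero hXne h1Xne))
        (mul_ne_zero hAne hPne)) hTzero
    intro i
    fin_cases i
    · exact hc0
    · exact hc1
    · exact hc2
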